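/- Over an algebraically closed field F of characteristic p ≥ 3, every irreducible representation of sl_2(F) whose associated character χ is nonzero has dimension exactly p. -/

import Mathlib

open Polynomial Module

namespace RS

variable {F : Type*} [Field F] {V : Type*} [AddCommGroup V] [Module F V]

/-- Peeling: if a product of (H - a•1) kills a nonzero vector, H has an eigenvector. -/
lemma exists_eig_of_multiset (H : Module.End F V) :
    ∀ (M : Multiset F) (x : V), x ≠ 0 →
      (Polynomial.aeval H (M.map fun a => X - C a).prod) x = 0 →
      ∃ (μ : F) (v : V), v ≠ 0 ∧ H v = μ • v := by
  intro M
  induction M using Multiset.induction with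
  | empty =>
    intro x hx h
    simp only [Multiset.map_zero, Multiset.prod_zero, map_one, Module.End.one_apply] at h
    exact absurd h hx
  | cons a s ih =>
    intro x hx hzero
    rw [Multiset.map_cons, Multiset.prod_cons, map_mul] at hzero
    by_cases hy : (Polynomial.aeval H (s.map fun a => X - C a).prod) x = 0
    · exact ih x hx hy
    · refine ⟨a, (Polynomial.aeval H (s.map fun a => X - C a).prod) x, hy, ?_⟩
      have : (Polynomial.aeval H (X - C a)) ((Polynomial.aeval H (s.map fun a => X - C a).prod) x) = 0 := by
        rw [← Module.End.mul_apply]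
        exact hzero
      rw [map_sub, aeval_X, aeval_C, Algebra.algebraMap_eq_smul_one] at this
      rw [LinearMap.sub_apply, LinearMap.smul_apply, Module.End.one_apply, sub_eq_zero] at this
      rw [this]

lemma exists_eigvec [IsAlgClosed F] [Nontrivial V] (H : Module.End F V) {q : F[X]}
    (hq : q.Monic) (h0 : Polynomial.aeval H q = 0) :
    ∃ (μ : F) (v : V), v ≠ 0 ∧ H v = μ • v := by
  obtain ⟨x, hx⟩ := exists_ne (0 : V)
  have hsplit : q.Splits := IsAlgClosed.splits q
  have heq := hsplit.eq_prod_roots_of_monic hq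
  refine exists_eig_of_multiset H q.roots x hx ?_
  rw [← heq, h0]
  rfl


section Rel

variable {E H Fo : Module.End F V}

lemma H_pow_apply {v : V} {μ : F} (hv : H v = μ • v) : ∀ k : ℕ, (H ^ k) v = μ ^ k • v := by
  intro k
  induction k with
  | zero => simp
  | succ k ih =>
    rw [pow_succ', Module.End.mul_apply, ih, map_smul, hv, smul_smul, ← pow_succ]

lemma eig_rel {b : F} (hHp : H ^ p = H + b • 1) {v : V} {μ : F} (hv : H v = μ • v)
    (hvne : v ≠ 0) : μ ^ p - μ = b := by
  have h1 : (H ^ p) v = μ ^ p • v := H_pow_apply hv p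
  rw [hHp] at h1
  have h2 : (μ ^ p - μ - b) • v = 0 := by
    rw [LinearMap.add_apply, LinearMap.smul_apply, Module.End.one_apply, hv] at h1
    rw [sub_smul, sub_smul, ← h1]
    abel
  rcases smul_eq_zero.mp h2 with h | h
  · linear_combination h
  · exact absurd h hvne


lemma apHF (hHF : H * Fo = Fo * H - (2:F) • Fo) (w : V) :
    H (Fo w) = Fo (H w) - (2:F) • (Fo w) := by
  have := LinearMap.congr_fun hHF w
  simpa [Module.End.mul_apply, LinearMap.sub_apply, LinearMap.smul_apply] using this

lemma apHE (hHE : H * E = E * H + (2:F) • E) (w : V) :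
    H (E w) = E (H w) + (2:F) • (E w) := by
  have := LinearMap.congr_fun hHE w
  simpa [Module.End.mul_apply, LinearMap.add_apply, LinearMap.smul_apply] using this

lemma apEF (hEF : E * Fo = Fo * E + H) (w : V) :
    E (Fo w) = Fo (E w) + H w := by
  have := LinearMap.congr_fun hEF w
  simpa [Module.End.mul_apply, LinearMap.add_apply] using this

lemma HFk (hHF : H * Fo = Fo * H - (2:F) • Fo) {v : V} {μ : F} (hv : H v = μ • v) :
    ∀ k : ℕ, H ((Fo ^ k) v) = (μ - 2 * (k:F)) • (Fo ^ k) v := by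
  intro k
  induction k with
  | zero => simpa using hv
  | succ k ih =>
    rw [pow_succ', Module.End.mul_apply, apHF hHF, ih, map_smul,
      ← Module.End.mul_apply Fo (Fo ^ k), ← pow_succ']
    rw [← sub_smul]
    congr 1
    push_cast
    ring

lemma HEk (hHE : H * E = E * H + (2:F) • E) {v : V} {μ : F} (hv : H v = μ • v) :
    ∀ k : ℕ, H ((E ^ k) v) = (μ + 2 * (k:F)) • (E ^ k) v := by
  intro k
  induction k with
  | zero => simpa using hv
  | succ k ih =>
    rw [pow_succ', Module.End.mul_apply, apHE hHE, ih, map_smul,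
      ← Module.End.mul_apply E (E ^ k), ← pow_succ']
    rw [← add_smul]
    congr 1
    push_cast
    ring

lemma EFk (hHF : H * Fo = Fo * H - (2:F) • Fo) (hEF : E * Fo = Fo * E + H)
    {v : V} {μ : F} (hv : H v = μ • v) :
    ∀ k : ℕ, E ((Fo ^ k) v) = (Fo ^ k) (E v)
      + ((k:F) * (μ - (k:F) + 1)) • (Fo ^ (k-1)) v := by
  intro k
  induction k with
  | zero => simp
  | succ k ih =>
    rw [pow_succ', Module.End.mul_apply, apEF hEF, ih, HFk hHF hv k, map_add, map_smul]
    rw [← Module.End.mul_apply Fo (Fo ^ k), ← pow_succ']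
    rcases k with _ | m
    · simp
    · have hridx : Fo ((Fo ^ (m + 1 - 1)) v) = (Fo ^ (m + 1 + 1 - 1)) v := by
        simp only [Nat.add_sub_cancel]
        rw [← Module.End.mul_apply Fo (Fo ^ m), ← pow_succ']
      rw [hridx]
      simp only [Nat.add_sub_cancel]
      rw [add_assoc, ← add_smul]
      congr 2
      push_cast
      ring


lemma common {p : ℕ} [CharP F p] (hp : 3 ≤ p) (hprime : p.Prime)
    (hHF : H * Fo = Fo * H - (2:F) • Fo) (hEF : E * Fo = Fo * E + H) {c : F}
    (hFp : Fo ^ p = c • 1)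
    (hirr : ∀ W : Submodule F V, (∀ w ∈ W, E w ∈ W) → (∀ w ∈ W, H w ∈ W) →
      (∀ w ∈ W, Fo w ∈ W) → W ≠ ⊥ → W = ⊤)
    {v : V} (hvne : v ≠ 0) {μ : F} (hv : H v = μ • v) {γ : F} (hFEv : Fo (E v) = γ • v)
    (hEvW : E v ∈ Submodule.span F (Set.range fun k : Fin p => (Fo ^ (k:ℕ)) v))
    (hnz : ∀ k, k < p → (Fo ^ k) v ≠ 0) :
    Module.finrank F V = p := by
  have hppos : 0 < p := by omega
  set g : Fin p → V := fun k => (Fo ^ (k:ℕ)) v with hg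
  set W : Submodule F V := Submodule.span F (Set.range g) with hW
  have hmem : ∀ k : ℕ, k < p → (Fo ^ k) v ∈ W :=
    fun k hk => Submodule.subset_span ⟨⟨k, hk⟩, rfl⟩
  -- invariance under H
  have hHW : ∀ w ∈ W, H w ∈ W := by
    intro w hw
    have hle : W ≤ W.comap H := by
      rw [hW, Submodule.span_le]
      rintro _ ⟨k, rfl⟩
      rw [SetLike.mem_coe, Submodule.mem_comap]
      rw [HFk hHF hv (k:ℕ)]
      exact W.smul_mem _ (hmem _ k.2)
    exact hle hw
  -- invariance under Fo
  have hFW : ∀ w ∈ W, Fo w ∈ W := by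
    intro w hw
    have hle : W ≤ W.comap Fo := by
      rw [hW, Submodule.span_le]
      rintro _ ⟨k, rfl⟩
      rw [SetLike.mem_coe, Submodule.mem_comap]
      have h1 : Fo ((Fo ^ (k:ℕ)) v) = (Fo ^ ((k:ℕ)+1)) v := by
        rw [pow_succ', Module.End.mul_apply]
      rcases Nat.lt_or_ge ((k:ℕ)+1) p with hlt | hge
      · rw [h1]; exact hmem _ hlt
      · have hkp : (k:ℕ) + 1 = p := by omega
        rw [h1, hkp, hFp]
        simp only [LinearMap.smul_apply, Module.End.one_apply]
        exact W.smul_mem _ (hmem 0 hppos)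
    exact hle hw
  -- invariance under E
  have hEW : ∀ w ∈ W, E w ∈ W := by
    intro w hw
    have hle : W ≤ W.comap E := by
      rw [hW, Submodule.span_le]
      rintro _ ⟨k, rfl⟩
      rw [SetLike.mem_coe, Submodule.mem_comap]
      rw [EFk hHF hEF hv (k:ℕ)]
      refine W.add_mem ?_ (W.smul_mem _ (hmem _ (by omega : (k:ℕ) - 1 < p)))
      rcases k with ⟨k, hk⟩
      rcases k with _ | m
      · simpa using hEvW
      · have h2 : (Fo ^ (m+1)) (E v) = (Fo ^ m) (Fo (E v)) := by
          rw [pow_succ, Module.End.mul_apply]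
        rw [h2, hFEv, map_smul]
        exact W.smul_mem _ (hmem m (by omega))
    exact hle hw
  have hWne : W ≠ ⊥ := by
    intro hbot
    have : v ∈ W := by simpa using hmem 0 hppos
    rw [hbot, Submodule.mem_bot] at this
    exact hvne this
  have hWtop : W = ⊤ := hirr W hEW hHW hFW hWne
  -- linear independence
  have h2ne : (2:F) ≠ 0 := by
    have : ((2:ℕ):F) ≠ 0 := by
      rw [Ne, CharP.cast_eq_zero_iff F p]
      intro hdvd
      have := Nat.le_of_dvd (by norm_num) hdvd
      omega
    simpa using this
  have hinj : Function.Injective (fun k : Fin p => μ - 2 * ((k:ℕ):F)) := by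
    intro k₁ k₂ hEq
    simp only [sub_right_injective.eq_iff] at hEq
    have hc : ((k₁:ℕ):F) = ((k₂:ℕ):F) := by
      exact mul_left_cancel₀ h2ne hEq
    have := CharP.natCast_injOn_Iio F p (Set.mem_Iio.mpr k₁.2) (Set.mem_Iio.mpr k₂.2) hc
    exact Fin.ext this
  have hli : LinearIndependent F g := by
    refine Module.End.eigenvectors_linearIndependent' H
      (fun k : Fin p => μ - 2 * ((k:ℕ):F)) hinj g (fun k => ?_)
    exact ⟨Module.End.mem_eigenspace_iff.mpr (HFk hHF hv (k:ℕ)), hnz _ k.2⟩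
  have hsp : ⊤ ≤ Submodule.span F (Set.range g) := by rw [← hW, hWtop]
  let B : Basis (Fin p) F V := Basis.mk hli hsp
  rw [Module.finrank_eq_card_basis B, Fintype.card_fin]


lemma fermat {p : ℕ} [CharP F p] (hprime : p.Prime) (k : ℕ) : ((k:F))^p = (k:F) := by
  haveI := Fact.mk hprime
  have h1 : ((k : ZMod p))^p = (k : ZMod p) := ZMod.pow_card _
  calc ((k:F))^p = (ZMod.castHom (dvd_refl p) F) ((k : ZMod p)^p) := by
        rw [map_pow, map_natCast]
    _ = (ZMod.castHom (dvd_refl p) F) (k : ZMod p) := by rw [h1]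
    _ = (k:F) := map_natCast _ _

lemma main {p : ℕ} [CharP F p] [IsAlgClosed F] [Nontrivial V] (hp : 3 ≤ p)
    (hHE : H * E = E * H + (2:F) • E) (hHF : H * Fo = Fo * H - (2:F) • Fo)
    (hEF : E * Fo = Fo * E + H) {a b c : F}
    (hEp : E ^ p = a • 1) (hHp : H ^ p = H + b • 1) (hFp : Fo ^ p = c • 1)
    (hirr : ∀ W : Submodule F V, (∀ w ∈ W, E w ∈ W) → (∀ w ∈ W, H w ∈ W) →
      (∀ w ∈ W, Fo w ∈ W) → W ≠ ⊥ → W = ⊤)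
    (hcase : c ≠ 0 ∨ (a = 0 ∧ b ≠ 0)) :
    Module.finrank F V = p := by
  have hprime : p.Prime := by
    rcases CharP.char_is_prime_or_zero F p with h | h
    · exact h
    · omega
  -- existence of an eigenvector for H
  have hqmon : (X ^ p - (X + C b) : F[X]).Monic := by
    apply Polynomial.monic_X_pow_sub
    rw [Polynomial.degree_X_add_C b]
    exact_mod_cast (by omega : 1 < p)
  have hq0 : Polynomial.aeval H (X ^ p - (X + C b) : F[X]) = 0 := by
    rw [map_sub, map_add, map_pow, aeval_X, aeval_C, Algebra.algebraMap_eq_smul_one, hHp]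
    abel
  obtain ⟨μ0, v0, hv0ne, hv0⟩ := exists_eigvec H hqmon hq0
  rcases hcase with hc | ⟨ha, hb⟩
  · -- case c ≠ 0
    have hFoinj : ∀ x : V, Fo x = 0 → x = 0 := by
      intro x hx
      obtain ⟨m, hm⟩ : ∃ m, p = m + 1 := ⟨p - 1, by omega⟩
      have h1 : (Fo ^ p) x = c • x := by
        rw [hFp]; simp
      rw [hm, pow_succ, Module.End.mul_apply, hx, map_zero] at h1
      have := h1.symm
      rw [smul_eq_zero] at this
      tauto
    have hnzk : ∀ (w : V), w ≠ 0 → ∀ k : ℕ, (Fo ^ k) w ≠ 0 := by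
      intro w hw k
      induction k with
      | zero => simpa using hw
      | succ k ih =>
        rw [pow_succ', Module.End.mul_apply]
        intro hcon
        exact ih (hFoinj _ hcon)
    -- finite dimensionality
    have hveig : ∀ j : ℕ, H ((E ^ j) v0) = (μ0 + 2 * (j:F)) • (E ^ j) v0 := HEk hHE hv0
    haveI : FiniteDimensional F V := by
      set g2 : Fin p × Fin p → V :=
        fun ij => (Fo ^ (ij.1 : ℕ)) ((E ^ (ij.2 : ℕ)) v0) with hg2
      set W2 : Submodule F V := Submodule.span F (Set.range g2) with hW2
      have hmem2 : ∀ i j : ℕ, i < p → j < p → (Fo ^ i) ((E ^ j) v0) ∈ W2 :=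
        fun i j hi hj => Submodule.subset_span ⟨(⟨i, hi⟩, ⟨j, hj⟩), rfl⟩
      have hHW2 : ∀ w ∈ W2, H w ∈ W2 := by
        intro w hw
        have hle : W2 ≤ W2.comap H := by
          rw [hW2, Submodule.span_le]
          rintro _ ⟨ij, rfl⟩
          rw [SetLike.mem_coe, Submodule.mem_comap]
          rw [HFk hHF (hveig (ij.2 : ℕ)) (ij.1 : ℕ)]
          exact W2.smul_mem _ (hmem2 _ _ ij.1.2 ij.2.2)
        exact hle hw
      have hFW2 : ∀ w ∈ W2, Fo w ∈ W2 := by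
        intro w hw
        have hle : W2 ≤ W2.comap Fo := by
          rw [hW2, Submodule.span_le]
          rintro _ ⟨ij, rfl⟩
          rw [SetLike.mem_coe, Submodule.mem_comap]
          have h1 : Fo (g2 ij) = (Fo ^ ((ij.1 : ℕ) + 1)) ((E ^ (ij.2 : ℕ)) v0) := by
            rw [pow_succ', Module.End.mul_apply]
          rcases Nat.lt_or_ge ((ij.1 : ℕ) + 1) p with hlt | hge
          · rw [h1]; exact hmem2 _ _ hlt ij.2.2
          · have hkp : (ij.1 : ℕ) + 1 = p := by omega
            rw [h1, hkp, hFp]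
            simp only [LinearMap.smul_apply, Module.End.one_apply]
            refine W2.smul_mem _ ?_
            simpa using hmem2 0 _ (by omega) ij.2.2
        exact hle hw
      have hEW2 : ∀ w ∈ W2, E w ∈ W2 := by
        intro w hw
        have hle : W2 ≤ W2.comap E := by
          rw [hW2, Submodule.span_le]
          rintro _ ⟨ij, rfl⟩
          rw [SetLike.mem_coe, Submodule.mem_comap]
          rw [EFk hHF hEF (hveig (ij.2 : ℕ)) (ij.1 : ℕ)]
          refine W2.add_mem ?_ (W2.smul_mem _ (hmem2 _ _ (by omega) ij.2.2))
          have h2 : E ((E ^ (ij.2 : ℕ)) v0) = (E ^ ((ij.2 : ℕ) + 1)) v0 := by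
            rw [pow_succ', Module.End.mul_apply]
          rw [h2]
          rcases Nat.lt_or_ge ((ij.2 : ℕ) + 1) p with hlt | hge
          · exact hmem2 _ _ ij.1.2 hlt
          · have hkp : (ij.2 : ℕ) + 1 = p := by omega
            rw [hkp, hEp]
            simp only [LinearMap.smul_apply, Module.End.one_apply, map_smul]
            exact W2.smul_mem _ (by simpa using hmem2 (ij.1 : ℕ) 0 ij.1.2 (by omega))
        exact hle hw
      have hW2ne : W2 ≠ ⊥ := by
        intro hbot
        have hv0W2 : v0 ∈ W2 := by simpa using hmem2 0 0 (by omega) (by omega)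
        rw [hbot, Submodule.mem_bot] at hv0W2
        exact hv0ne hv0W2
      have hW2top : W2 = ⊤ := hirr W2 hEW2 hHW2 hFW2 hW2ne
      refine Module.finite_def.mpr ?_
      rw [← hW2top]
      exact Submodule.fg_span (Set.finite_range g2)
    -- the operator T = Fo * E commutes with H
    have hTH : H * (Fo * E) = (Fo * E) * H := by
      calc H * (Fo * E) = (H * Fo) * E := (mul_assoc _ _ _).symm
        _ = (Fo * H) * E - (2:F) • (Fo * E) := by rw [hHF, sub_mul, smul_mul_assoc]
        _ = Fo * (H * E) - (2:F) • (Fo * E) := by rw [mul_assoc]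
        _ = Fo * (E * H) + (2:F) • (Fo * E) - (2:F) • (Fo * E) := by
            rw [hHE, mul_add, mul_smul_comm]
        _ = (Fo * E) * H := by rw [mul_assoc]; abel
    -- restrict T to the eigenspace of H
    have hv0U : v0 ∈ Module.End.eigenspace H μ0 := Module.End.mem_eigenspace_iff.mpr hv0
    have hTU : ∀ x ∈ Module.End.eigenspace H μ0, (Fo * E) x ∈ Module.End.eigenspace H μ0 := by
      intro x hx
      rw [Module.End.mem_eigenspace_iff] at hx ⊢
      calc H ((Fo * E) x) = (H * (Fo * E)) x := rfl
        _ = ((Fo * E) * H) x := by rw [hTH]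
        _ = (Fo * E) (H x) := rfl
        _ = μ0 • (Fo * E) x := by rw [hx, map_smul]
    haveI : Nontrivial (Module.End.eigenspace H μ0) := by
      refine ⟨⟨v0, hv0U⟩, 0, ?_⟩
      intro hcon
      rw [Subtype.ext_iff] at hcon
      exact hv0ne hcon
    obtain ⟨τ, hτ⟩ := Module.End.exists_eigenvalue ((Fo * E).restrict hTU)
    obtain ⟨x, hxe⟩ := hτ.exists_hasEigenvector
    have hTv0' : (Fo * E) (x : V) = τ • (x : V) := by
      have h3 := hxe.apply_eq_smul
      have h4 := congrArg (Subtype.val) h3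
      simpa [LinearMap.restrict_apply] using h4
    have hHv0' : H (x : V) = μ0 • (x : V) := Module.End.mem_eigenspace_iff.mp x.2
    have hx0 : (x : V) ≠ 0 := fun hcon => hxe.2 (Subtype.ext hcon)
    -- set up the common lemma
    have hvne : Fo (x : V) ≠ 0 := fun hcon => hx0 (hFoinj _ hcon)
    have hv : H (Fo (x : V)) = (μ0 - 2) • Fo (x : V) := by
      rw [apHF hHF, hHv0', map_smul, sub_smul]
    have hEv : E (Fo (x : V)) = (τ + μ0) • (x : V) := by
      rw [apEF hEF, hHv0', ← Module.End.mul_apply Fo E, hTv0', add_smul]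
    have hFEv : Fo (E (Fo (x : V))) = (τ + μ0) • Fo (x : V) := by rw [hEv, map_smul]
    have hx_eq : (x : V) = c⁻¹ • (Fo ^ (p - 1)) (Fo (x : V)) := by
      have h5 : (Fo ^ p) (x : V) = c • (x : V) := by
        rw [hFp]; rfl
      obtain ⟨m, hm⟩ : ∃ m, p = m + 1 := ⟨p - 1, by omega⟩
      have h6 : (Fo ^ p) (x : V) = (Fo ^ (p - 1)) (Fo (x : V)) := by
        rw [hm, pow_succ, Module.End.mul_apply]
        congr 2
      rw [h6] at h5
      rw [h5, smul_smul, inv_mul_cancel₀ hc, one_smul]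
    have hEvW : E (Fo (x : V)) ∈ Submodule.span F
        (Set.range fun k : Fin p => (Fo ^ (k:ℕ)) (Fo (x : V))) := by
      have hmemW : (Fo ^ (p-1)) (Fo (x : V)) ∈ Submodule.span F
          (Set.range fun k : Fin p => (Fo ^ (k:ℕ)) (Fo (x : V))) :=
        Submodule.subset_span ⟨⟨p - 1, by omega⟩, rfl⟩
      have hcalc : E (Fo (x : V)) = ((τ + μ0) * c⁻¹) • (Fo ^ (p-1)) (Fo (x : V)) := by
        calc E (Fo (x : V)) = (τ + μ0) • (x : V) := hEv
          _ = (τ + μ0) • (c⁻¹ • (Fo ^ (p-1)) (Fo (x : V))) := by rw [← hx_eq]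
          _ = ((τ + μ0) * c⁻¹) • (Fo ^ (p-1)) (Fo (x : V)) := smul_smul _ _ _
      rw [hcalc]
      exact Submodule.smul_mem _ _ hmemW
    exact common hp hprime hHF hEF hFp hirr hvne hv hFEv hEvW
      (fun k _ => hnzk _ hvne k)
  · -- case a = 0 and b ≠ 0
    rw [ha, zero_smul] at hEp
    -- find the top of the E-string
    have hEj : ∃ j, (E ^ j) v0 ≠ 0 ∧ (E ^ (j + 1)) v0 = 0 := by
      have key : ∀ m, (E ^ m) v0 = 0 → ∃ j, (E ^ j) v0 ≠ 0 ∧ (E ^ (j + 1)) v0 = 0 := by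
        intro m
        induction m with
        | zero => intro h0; simp at h0; exact absurd h0 hv0ne
        | succ m ih =>
          intro h0
          by_cases hm : (E ^ m) v0 = 0
          · exact ih hm
          · exact ⟨m, hm, h0⟩
      apply key p
      rw [hEp]
      rfl
    obtain ⟨j, hjne, hj1⟩ := hEj
    set v : V := (E ^ j) v0 with hvdef
    have hv : H v = (μ0 + 2 * (j:F)) • v := HEk hHE hv0 j
    have hEv : E v = 0 := by
      rw [hvdef, ← Module.End.mul_apply, ← pow_succ']
      exact hj1
    have hFEv : Fo (E v) = (0:F) • v := by rw [hEv, map_zero, zero_smul]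
    have hEvW : E v ∈ Submodule.span F (Set.range fun k : Fin p => (Fo ^ (k:ℕ)) v) := by
      rw [hEv]; exact Submodule.zero_mem _
    have hbμ : (μ0 + 2 * (j:F)) ^ p - (μ0 + 2 * (j:F)) = b := eig_rel hHp hv hjne
    set μ : F := μ0 + 2 * (j:F) with hμdef
    -- nonvanishing of the Fo-string
    have hnz : ∀ k, k < p → (Fo ^ k) v ≠ 0 := by
      intro k
      induction k with
      | zero => intro _; simpa using hjne
      | succ k ih =>
        intro hk1 hcon
        have hkv : (Fo ^ k) v ≠ 0 := ih (by omega)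
        have h7 := EFk hHF hEF hv (k + 1)
        rw [hcon, map_zero] at h7
        have h8 : (Fo ^ (k + 1)) (E v) = 0 := by rw [hEv, map_zero]
        rw [h8, zero_add] at h7
        have h9 : ((k + 1 : ℕ):F) * (μ - ((k + 1 : ℕ):F) + 1) = 0 := by
          rcases smul_eq_zero.mp h7.symm with hcoef | hzero
          · exact hcoef
          · exact absurd (by simpa using hzero) hkv
        have hk1ne : ((k + 1 : ℕ):F) ≠ 0 := by
          rw [Ne, CharP.cast_eq_zero_iff F p]
          intro hdvd
          have := Nat.le_of_dvd (by omega) hdvd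
          omega
        have hμk : μ = (k:F) := by
          rcases mul_eq_zero.mp h9 with h | h
          · exact absurd h hk1ne
          · push_cast at h ⊢
            linear_combination h
        apply hb
        rw [← hbμ, hμk, fermat hprime k, sub_self]
    exact common hp hprime hHF hEF hFp hirr hjne hv hFEv hEvW hnz

end Rel

end RS


/-- Rudakov–Shafarevich: over an algebraically closed field `F` of characteristic
`p ≥ 3`, every irreducible representation of `sl₂(F)` whose associated character `χ` is nonzero
has dimension exactly `p`.  Here `sl₂(F)` is presented by its standard basis `e, h, f`, and the
character `χ` is determined by the action of the central elements `x^p - x^[p]` of `U(sl₂)`,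
via the standard restricted structure `e^[p] = 0`, `h^[p] = h`, `f^[p] = 0`. -/
theorem sl2_irreducible_dim_p {F : Type*} [Field F] [IsAlgClosed F] {p : ℕ} [CharP F p]
    (hp : 3 ≤ p) {L : Type*} [LieRing L] [LieAlgebra F L]
    (e h f : L)
    (hhe : ⁅h, e⁆ = (2 : F) • e) (hhf : ⁅h, f⁆ = (-2 : F) • f) (hef : ⁅e, f⁆ = h)
    (hspan : Submodule.span F ({e, h, f} : Set L) = ⊤)
    (hdim : Module.finrank F L = 3)
    (V : Type*) [AddCommGroup V] [Module F V] [LieRingModule L V] [LieModule F L V]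
    [LieModule.IsIrreducible F L V]
    (χ : L →ₗ[F] F)
    (hχe : (LieModule.toEnd F L V e) ^ p = χ e ^ p • (1 : Module.End F V))
    (hχh : (LieModule.toEnd F L V h) ^ p - LieModule.toEnd F L V h
        = χ h ^ p • (1 : Module.End F V))
    (hχf : (LieModule.toEnd F L V f) ^ p = χ f ^ p • (1 : Module.End F V))
    (hχ : χ ≠ 0) :
    Module.finrank F V = p := by
  classical
  have hprime : p.Prime := by
    rcases CharP.char_is_prime_or_zero F p with h' | h'
    · exact h'
    · exfalso
      have h2 : ((2:ℕ):F) ≠ 0 := by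
        intro hcon
        rw [CharP.cast_eq_zero_iff F p] at hcon
        omega
      omega
  -- notation
  set E : Module.End F V := LieModule.toEnd F L V e with hEdef
  set H : Module.End F V := LieModule.toEnd F L V h with hHdef
  set Fo : Module.End F V := LieModule.toEnd F L V f with hFdef
  -- commutation relations
  have hHE : H * E = E * H + (2:F) • E := by
    letI : LieRing (Module.End F V) := LieRing.ofAssociativeRing
    have h1 : (LieModule.toEnd F L V) ⁅h, e⁆ = ⁅H, E⁆ := LieHom.map_lie _ _ _
    rw [hhe, map_smul, Ring.lie_def] at h1
    rw [← sub_eq_iff_eq_add']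
    exact h1.symm
  have hHF : H * Fo = Fo * H - (2:F) • Fo := by
    letI : LieRing (Module.End F V) := LieRing.ofAssociativeRing
    have h1 : (LieModule.toEnd F L V) ⁅h, f⁆ = ⁅H, Fo⁆ := LieHom.map_lie _ _ _
    rw [hhf, map_smul, Ring.lie_def] at h1
    have h2 : H * Fo - Fo * H = (-2:F) • Fo := h1.symm
    rw [sub_eq_iff_eq_add] at h2
    rw [h2, neg_smul]
    abel
  have hEF : E * Fo = Fo * E + H := by
    letI : LieRing (Module.End F V) := LieRing.ofAssociativeRing
    have h1 : (LieModule.toEnd F L V) ⁅e, f⁆ = ⁅E, Fo⁆ := LieHom.map_lie _ _ _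
    rw [hef, Ring.lie_def] at h1
    rw [← sub_eq_iff_eq_add']
    exact h1.symm
  -- nontriviality
  haveI : Nontrivial V := by
    rcases subsingleton_or_nontrivial V with hs | hn
    · exfalso
      apply (bot_ne_top : (⊥ : LieSubmodule F L V) ≠ ⊤)
      ext x
      have : x = 0 := Subsingleton.elim x 0
      simp [this, LieSubmodule.mem_bot, LieSubmodule.mem_top]
    · exact hn
  -- the irreducibility hypothesis, in submodule form
  have hirr : ∀ W : Submodule F V, (∀ w ∈ W, E w ∈ W) → (∀ w ∈ W, H w ∈ W) →
      (∀ w ∈ W, Fo w ∈ W) → W ≠ ⊥ → W = ⊤ := by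
    intro W hEW hHW hFW hne
    have hlie : ∀ (x : L) (m : V), m ∈ W → ⁅x, m⁆ ∈ W := by
      intro x m hm
      have hx : x ∈ Submodule.span F ({e, h, f} : Set L) := by rw [hspan]; trivial
      induction hx using Submodule.span_induction with
      | mem y hy =>
        rcases hy with hy | hy | hy
        · rw [hy, ← LieModule.toEnd_apply_apply F L V e m, ← hEdef]
          exact hEW m hm
        · rw [hy, ← LieModule.toEnd_apply_apply F L V h m, ← hHdef]
          exact hHW m hm
        · rw [Set.mem_singleton_iff.mp hy, ← LieModule.toEnd_apply_apply F L V f m, ← hFdef]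
          exact hFW m hm
      | zero => rw [zero_lie]; exact W.zero_mem
      | add y z _ _ hy hz => rw [add_lie]; exact W.add_mem hy hz
      | smul t y _ hy => rw [smul_lie]; exact W.smul_mem t hy
    let lieW : LieSubmodule F L V := { W with lie_mem := fun {x m} hm => hlie x m hm }
    have hmemW : ∀ x : V, x ∈ W ↔ x ∈ lieW := fun x => Iff.rfl
    rcases eq_bot_or_eq_top lieW with hbot | htop
    · exfalso
      apply hne
      rw [eq_bot_iff]
      intro x hx
      have := (hmemW x).mp hx
      rw [hbot, LieSubmodule.mem_bot] at this
      simpa using this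
    · rw [eq_top_iff]
      intro x _
      exact (hmemW x).mpr (htop ▸ LieSubmodule.mem_top _)
  -- power relations
  have hHp : H ^ p = H + (χ h ^ p) • 1 := by
    rw [← sub_eq_iff_eq_add']
    exact hχh
  rcases ne_or_eq (χ f) 0 with hf | hf
  · exact RS.main hp hHE hHF hEF hχe hHp hχf hirr (Or.inl (pow_ne_zero p hf))
  rcases ne_or_eq (χ e) 0 with he | he
  · -- swap e and f
    have hodd : Odd p := hprime.odd_of_ne_two (by omega)
    have hHE' : (-H) * Fo = Fo * (-H) + (2:F) • Fo := by
      rw [neg_mul, mul_neg, hHF]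
      abel
    have hHF' : (-H) * E = E * (-H) - (2:F) • E := by
      rw [neg_mul, mul_neg, hHE]
      abel
    have hEF' : Fo * E = E * Fo + (-H) := by
      rw [hEF]
      abel
    have hHp' : (-H) ^ p = -H + (-(χ h ^ p)) • 1 := by
      rw [hodd.neg_pow, hHp, neg_add, neg_smul]
    have hirr' : ∀ W : Submodule F V, (∀ w ∈ W, Fo w ∈ W) → (∀ w ∈ W, (-H) w ∈ W) →
        (∀ w ∈ W, E w ∈ W) → W ≠ ⊥ → W = ⊤ := by
      intro W h1 h2 h3 hne
      refine hirr W h3 (fun w hw => ?_) h1 hne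
      have := h2 w hw
      rw [LinearMap.neg_apply] at this
      simpa using W.neg_mem this
    exact RS.main hp hHE' hHF' hEF' hχf hHp' hχe hirr' (Or.inl (pow_ne_zero p he))
  · -- χ e = χ f = 0, so χ h ≠ 0
    have hh : χ h ≠ 0 := by
      intro hh0
      apply hχ
      apply LinearMap.ext
      intro x
      have hx : x ∈ Submodule.span F ({e, h, f} : Set L) := by rw [hspan]; trivial
      rw [LinearMap.zero_apply]
      induction hx using Submodule.span_induction with
      | mem y hy =>
        rcases hy with hy | hy | hy
        · rw [hy, he]
        · rw [hy, hh0]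
        · rw [Set.mem_singleton_iff.mp hy, hf]
      | zero => rw [map_zero]
      | add y z _ _ hy hz => rw [map_add, hy, hz, add_zero]
      | smul t y _ hy => rw [map_smul, hy, smul_zero]
    refine RS.main hp hHE hHF hEF hχe hHp hχf hirr (Or.inr ⟨?_, pow_ne_zero p hh⟩)
    rw [he, zero_pow (by omega : p ≠ 0)]
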